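/- Let H be a complex Hilbert space, ι a countable index type, and ψ : ι → H a regular upper semi-frame with frame operator S and g_k the unique vector with S g_k = ψ_k. If for every f ∈ H the family (|⟨g_k, f⟩|²)_k is summable (i.e. the coefficient sequence (⟨g_k, f⟩)_k lies in ℓ²(ι) for every f), then S⁻¹ is bounded; equivalently, there exists m > 0 such that m‖f‖² ≤ ∑_k |⟨ψ_k, f⟩|² for all f ∈ H, so that ψ is in fact a frame. -/

import Mathlib

open scoped ComplexInnerProductSpace
open scoped ENNReal

open RCLike Finset in
/-- Cauchy–Schwarz for `tsum`. -/
private lemma tsum_cs {ι : Type*} (a b : ι → ℝ) (ha0 : ∀ k, 0 ≤ a k) (hb0 : ∀ k, 0 ≤ b k)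
    (ha : Summable (fun k => a k ^ 2)) (hb : Summable (fun k => b k ^ 2)) :
    Summable (fun k => a k * b k) ∧
      ∑' k, a k * b k ≤ Real.sqrt (∑' k, a k ^ 2) * Real.sqrt (∑' k, b k ^ 2) := by
  have hsum : Summable (fun k => a k * b k) := by
    refine Summable.of_nonneg_of_le (fun k => mul_nonneg (ha0 k) (hb0 k)) (fun k => ?_) (ha.add hb)
    nlinarith [sq_nonneg (a k - b k), mul_nonneg (ha0 k) (hb0 k)]
  refine ⟨hsum, hsum.tsum_le_of_sum_le fun s => ?_⟩
  refine (Real.sum_mul_le_sqrt_mul_sqrt s a b).trans ?_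
  gcongr <;> first
    | exact Real.sqrt_nonneg _
    | exact ha.sum_le_tsum s (fun k _ => sq_nonneg _)
    | exact hb.sum_le_tsum s (fun k _ => sq_nonneg _)

open RCLike in
/-- If all coefficient sequences are `ℓ²`, the analysis operator is bounded (closed graph). -/
private lemma exists_bessel_bound {H : Type*} [NormedAddCommGroup H] [InnerProductSpace ℂ H]
    [CompleteSpace H] {ι : Type*} (g : ι → H)
    (hcoef : ∀ f : H, Summable (fun k => ‖⟪g k, f⟫‖ ^ 2)) :
    ∃ B : ℝ, 0 < B ∧ ∀ f : H, ∑' k, ‖⟪g k, f⟫‖ ^ 2 ≤ B * ‖f‖ ^ 2 := by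
  have hmem : ∀ f : H, Memℓp (fun k => ⟪g k, f⟫) 2 := by
    intro f
    apply memℓp_gen
    have : (2 : ℝ≥0∞).toReal = ((2 : ℕ) : ℝ) := by norm_num
    rw [this]
    simpa [Real.rpow_natCast] using hcoef f
  set A : H →ₗ[ℂ] lp (fun _ : ι => ℂ) 2 :=
    { toFun := fun f => ⟨fun k => ⟪g k, f⟫, hmem f⟩
      map_add' := fun x y => by
        apply lp.ext; funext k; simp [inner_add_right]; rfl
      map_smul' := fun c x => by
        apply lp.ext; funext k; simp [inner_smul_right] } with hA
  have hAapp : ∀ (f : H) (k : ι), (A f : ∀ _ : ι, ℂ) k = ⟪g k, f⟫ := fun f k => rfl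
  have hclosed : IsClosed (A.graph : Set (H × lp (fun _ : ι => ℂ) 2)) := by
    have : (A.graph : Set (H × lp (fun _ : ι => ℂ) 2)) =
        ⋂ k : ι, {p | (p.2 : ∀ _ : ι, ℂ) k = ⟪g k, p.1⟫} := by
      ext ⟨f, c⟩
      simp only [SetLike.mem_coe, LinearMap.mem_graph_iff, Set.mem_iInter, Set.mem_setOf_eq]
      constructor
      · rintro rfl k; rfl
      · intro h; apply lp.ext; funext k; exact h k
    rw [this]
    refine isClosed_iInter fun k => isClosed_eq ?_ ?_
    · have hlip : LipschitzWith 1 (fun c : lp (fun _ : ι => ℂ) 2 => (c : ∀ _ : ι, ℂ) k) := by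
        refine LipschitzWith.of_dist_le_mul fun x y => ?_
        have := lp.norm_apply_le_norm (p := 2) (by norm_num) (x - y) k
        simp only [lp.coeFn_sub, Pi.sub_apply] at this
        simpa [dist_eq_norm] using this
      exact hlip.continuous.comp continuous_snd
    · exact (innerSL ℂ (g k)).continuous.comp continuous_fst
  have hcont : Continuous A := A.continuous_of_isClosed_graph hclosed
  set CA : H →L[ℂ] lp (fun _ : ι => ℂ) 2 := ⟨A, hcont⟩ with hCA
  refine ⟨‖CA‖ ^ 2 + 1, by positivity, fun f => ?_⟩
  have h1 : ∑' k, ‖⟪g k, f⟫‖ ^ 2 = ‖CA f‖ ^ 2 := by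
    have := lp.norm_rpow_eq_tsum (p := 2) (by norm_num) (CA f)
    have h2 : (2 : ℝ≥0∞).toReal = ((2 : ℕ) : ℝ) := by norm_num
    rw [h2] at this
    simp only [Real.rpow_natCast] at this
    exact this.symm
  rw [h1]
  have h3 : ‖CA f‖ ≤ ‖CA‖ * ‖f‖ := CA.le_opNorm f
  have h4 : ‖CA f‖ * ‖CA f‖ ≤ (‖CA‖ * ‖f‖) * (‖CA‖ * ‖f‖) :=
    mul_le_mul h3 h3 (norm_nonneg _) (by positivity)
  nlinarith [sq_nonneg ‖f‖]

open RCLike Finset in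
private lemma summable_smul_of_l2 {H : Type*} [NormedAddCommGroup H] [InnerProductSpace ℂ H]
    [CompleteSpace H] {ι : Type*} (g : ι → H) (B : ℝ) (hB : 0 < B)
    (hg : ∀ f : H, Summable (fun k => ‖⟪g k, f⟫‖ ^ 2))
    (hBle : ∀ f : H, ∑' k, ‖⟪g k, f⟫‖ ^ 2 ≤ B * ‖f‖ ^ 2)
    (c : ι → ℂ) (hc : Summable (fun k => ‖c k‖ ^ 2)) :
    Summable (fun k => c k • g k) := by
  rw [summable_iff_vanishing_norm]
  intro ε hε
  obtain ⟨s, hs⟩ := summable_iff_vanishing_norm.1 hc (ε ^ 2 / (B + 1)) (by positivity)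
  refine ⟨s, fun t ht => ?_⟩
  set x := ∑ k ∈ t, c k • g k with hx
  -- the key estimate : ‖x‖ ^ 2 ≤ √(∑_t ‖c‖²) * √B * ‖x‖
  have key : ‖x‖ ^ 2 ≤ Real.sqrt (∑ k ∈ t, ‖c k‖ ^ 2) * (Real.sqrt B * ‖x‖) := by
    have h1 : re (⟪x, x⟫ : ℂ) = ‖x‖ ^ 2 := inner_self_eq_norm_sq x
    have h2 : (⟪x, x⟫ : ℂ) = ∑ k ∈ t, (starRingEnd ℂ) (c k) * ⟪g k, x⟫ := by
      rw [hx, sum_inner]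
      exact Finset.sum_congr rfl fun k _ => inner_smul_left _ _ _
    have h3 : ‖x‖ ^ 2 ≤ ∑ k ∈ t, ‖c k‖ * ‖⟪g k, x⟫‖ := by
      rw [← h1, h2, map_sum]
      refine Finset.sum_le_sum fun k _ => ?_
      calc re ((starRingEnd ℂ) (c k) * ⟪g k, x⟫) ≤ ‖(starRingEnd ℂ) (c k) * ⟪g k, x⟫‖ :=
            re_le_norm _
        _ = ‖c k‖ * ‖⟪g k, x⟫‖ := by rw [norm_mul, RCLike.norm_conj]
    refine h3.trans ?_
    refine (Real.sum_mul_le_sqrt_mul_sqrt t (fun k => ‖c k‖) (fun k => ‖⟪g k, x⟫‖)).trans ?_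
    refine mul_le_mul_of_nonneg_left ?_ (Real.sqrt_nonneg _)
    have hle : ∑ k ∈ t, ‖⟪g k, x⟫‖ ^ 2 ≤ (Real.sqrt B * ‖x‖) ^ 2 := by
      calc ∑ k ∈ t, ‖⟪g k, x⟫‖ ^ 2 ≤ ∑' k, ‖⟪g k, x⟫‖ ^ 2 :=
            (hg x).sum_le_tsum t (fun k _ => sq_nonneg _)
        _ ≤ B * ‖x‖ ^ 2 := hBle x
        _ = (Real.sqrt B * ‖x‖) ^ 2 := by
            rw [mul_pow, Real.sq_sqrt hB.le]
    calc Real.sqrt (∑ k ∈ t, ‖⟪g k, x⟫‖ ^ 2) ≤ Real.sqrt ((Real.sqrt B * ‖x‖) ^ 2) :=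
          Real.sqrt_le_sqrt hle
      _ = Real.sqrt B * ‖x‖ := Real.sqrt_sq (by positivity)
  have hδ : ∑ k ∈ t, ‖c k‖ ^ 2 < ε ^ 2 / (B + 1) := by
    have := hs t ht
    calc ∑ k ∈ t, ‖c k‖ ^ 2 ≤ ‖∑ k ∈ t, ‖c k‖ ^ 2‖ := le_abs_self _
      _ < ε ^ 2 / (B + 1) := this
  -- conclude ‖x‖ < ε
  have hr : Real.sqrt (∑ k ∈ t, ‖c k‖ ^ 2) * Real.sqrt B < ε := by
    rw [← Real.sqrt_mul (Finset.sum_nonneg fun k _ => sq_nonneg _)]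
    have h5 : (∑ k ∈ t, ‖c k‖ ^ 2) * B < ε ^ 2 := by
      have hnn : 0 ≤ ∑ k ∈ t, ‖c k‖ ^ 2 := Finset.sum_nonneg fun k _ => sq_nonneg _
      calc (∑ k ∈ t, ‖c k‖ ^ 2) * B ≤ (∑ k ∈ t, ‖c k‖ ^ 2) * (B + 1) := by nlinarith
        _ < ε ^ 2 / (B + 1) * (B + 1) := by
            apply mul_lt_mul_of_pos_right hδ; linarith
        _ = ε ^ 2 := by field_simp
    exact (Real.sqrt_lt' hε).2 h5
  nlinarith [norm_nonneg x, Real.sqrt_nonneg (∑ k ∈ t, ‖c k‖ ^ 2), Real.sqrt_nonneg B,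
    mul_nonneg (Real.sqrt_nonneg (∑ k ∈ t, ‖c k‖ ^ 2)) (Real.sqrt_nonneg B)]

open RCLike in

/-- Let `ψ : ι → H` be a regular (discrete) upper semi-frame with frame
operator `S` and `g k = S⁻¹ ψ k`.  If the coefficient sequence `(⟪g k, f⟫)ₖ` is
square-summable for every `f ∈ H`, then `ψ` satisfies a lower frame bound, i.e. `ψ` is in
fact a frame (equivalently, `S⁻¹` is bounded). -/
theorem regular_upper_semiframe_dual_coefficients_l2_implies_frame
    {H : Type*} [NormedAddCommGroup H] [InnerProductSpace ℂ H] [CompleteSpace H]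
    {ι : Type*} [Countable ι] (ψ : ι → H) (M : ℝ)
    (hbessel : ∀ f : H, Summable (fun k => ‖⟪ψ k, f⟫‖ ^ 2) ∧
      ∑' k, ‖⟪ψ k, f⟫‖ ^ 2 ≤ M * ‖f‖ ^ 2)
    (htotal : (Submodule.span ℂ (Set.range ψ)).topologicalClosure = ⊤)
    (S : H →L[ℂ] H)
    (hS : ∀ f : H, HasSum (fun k => ⟪ψ k, f⟫ • ψ k) (S f))
    (hSinj : Function.Injective ⇑S)
    (g : ι → H) (hreg : ∀ k, S (g k) = ψ k)
    (hcoef : ∀ f : H, Summable (fun k => ‖⟪g k, f⟫‖ ^ 2)) :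
    ∃ m : ℝ, 0 < m ∧ ∀ f : H, m * ‖f‖ ^ 2 ≤ ∑' k, ‖⟪ψ k, f⟫‖ ^ 2 := by
  obtain ⟨B, hBpos, hBle⟩ := exists_bessel_bound g hcoef
  refine ⟨B⁻¹, by positivity, fun f => ?_⟩
  set a : ι → ℂ := fun k => ⟪ψ k, f⟫ with ha
  have hasum : Summable (fun k => ‖a k‖ ^ 2) := (hbessel f).1
  have hsum : Summable (fun k => a k • g k) := summable_smul_of_l2 g B hBpos hcoef hBle a hasum
  obtain ⟨h, hh⟩ := hsum
  -- reconstruction : `f = ∑ₖ ⟪ψ k, f⟫ • g k`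
  have hSh : HasSum (fun k => a k • ψ k) (S h) := by
    have := hh.mapL S
    simpa [map_smul, hreg] using this
  have hf_eq : h = f := hSinj (hSh.unique (hS f))
  rw [hf_eq] at hh
  -- expanding `⟪f, f⟫`
  have hinner : HasSum (fun k => a k * ⟪f, g k⟫) ⟪f, f⟫ := by
    have := hh.mapL (innerSL ℂ f)
    simpa [inner_smul_right] using this
  -- Cauchy-Schwarz for the coefficient sequences
  obtain ⟨hsummul, hcs⟩ := tsum_cs (fun k => ‖a k‖) (fun k => ‖⟪g k, f⟫‖)
    (fun k => norm_nonneg _) (fun k => norm_nonneg _) hasum (hcoef f)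
  set Φ : ℝ := ∑' k, ‖a k‖ ^ 2 with hΦ
  have hΦnn : 0 ≤ Φ := tsum_nonneg fun k => sq_nonneg _
  have hnorm_eq : ∀ k, ‖a k * ⟪f, g k⟫‖ = ‖a k‖ * ‖⟪g k, f⟫‖ := fun k => by
    rw [norm_mul, norm_inner_symm f (g k)]
  have h6 : ‖f‖ ^ 2 ≤ ∑' k, ‖a k‖ * ‖⟪g k, f⟫‖ := by
    have h1 : re (⟪f, f⟫ : ℂ) = ‖f‖ ^ 2 := inner_self_eq_norm_sq f
    have hsummul' : Summable (fun k => ‖a k * ⟪f, g k⟫‖) := by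
      simpa only [hnorm_eq] using hsummul
    have h2 : ‖(⟪f, f⟫ : ℂ)‖ ≤ ∑' k, ‖a k * ⟪f, g k⟫‖ := by
      rw [← hinner.tsum_eq]
      exact norm_tsum_le_tsum_norm hsummul'
    have h3 : (∑' k, ‖a k * ⟪f, g k⟫‖) = ∑' k, ‖a k‖ * ‖⟪g k, f⟫‖ :=
      tsum_congr fun k => hnorm_eq k
    calc ‖f‖ ^ 2 = re (⟪f, f⟫ : ℂ) := h1.symm
      _ ≤ ‖(⟪f, f⟫ : ℂ)‖ := re_le_norm _
      _ ≤ ∑' k, ‖a k * ⟪f, g k⟫‖ := h2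
      _ = ∑' k, ‖a k‖ * ‖⟪g k, f⟫‖ := h3
  have h7 : Real.sqrt (∑' k, ‖⟪g k, f⟫‖ ^ 2) ≤ Real.sqrt B * ‖f‖ := by
    calc Real.sqrt (∑' k, ‖⟪g k, f⟫‖ ^ 2) ≤ Real.sqrt ((Real.sqrt B * ‖f‖) ^ 2) := by
          apply Real.sqrt_le_sqrt
          rw [mul_pow, Real.sq_sqrt hBpos.le]
          exact hBle f
      _ = Real.sqrt B * ‖f‖ := Real.sqrt_sq (by positivity)
  have h8 : ‖f‖ ^ 2 ≤ Real.sqrt Φ * (Real.sqrt B * ‖f‖) := by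
    refine h6.trans (hcs.trans ?_)
    exact mul_le_mul_of_nonneg_left h7 (Real.sqrt_nonneg _)
  -- conclude
  rw [inv_mul_le_iff₀ hBpos]
  rcases eq_or_lt_of_le (norm_nonneg f) with hf0 | hf0
  · rw [← hf0]
    nlinarith [mul_nonneg hBpos.le hΦnn]
  · have h9 : ‖f‖ ≤ Real.sqrt Φ * Real.sqrt B := by
      have := h8
      nlinarith [Real.sqrt_nonneg Φ, Real.sqrt_nonneg B]
    have h10 : ‖f‖ ^ 2 ≤ Φ * B := by
      calc ‖f‖ ^ 2 ≤ (Real.sqrt Φ * Real.sqrt B) ^ 2 := by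
            nlinarith [mul_nonneg (Real.sqrt_nonneg Φ) (Real.sqrt_nonneg B), norm_nonneg f]
        _ = Φ * B := by rw [mul_pow, Real.sq_sqrt hΦnn, Real.sq_sqrt hBpos.le]
    nlinarith
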